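/- If the balance conditions W_{p+1}ᵀW_{p+1} = W_p W_pᵀ hold along the gradient flow and X = W_N⋯W_1 where each W_p = Q_p Λ Q_{p-1}ᵀ with Λ diagonal positive, then A_{p+1}A_{p+1}ᵀ = (XXᵀ)^{(N-p)/N} and B_{p-1}ᵀB_{p-1} = (XᵀX)^{(p-1)/N}, where A_p = W_N⋯W_p and B_p = W_p⋯W_1 and fractional powers are defined spectrally. -/
import Mathlib


open Matrix

/-- The partial product `A_{p+1} = W_N ⋯ W_{p+1}` (with `A_{N+1} = 1`). -/
def Aprod (d : ℕ) (W : ℕ → Matrix (Fin d) (Fin d) ℝ) (N p : ℕ) :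
    Matrix (Fin d) (Fin d) ℝ :=
  ((List.range (N - p)).map (fun q => W (N - q))).prod

/-- The partial product `B_p = W_p ⋯ W_1` (with `B_0 = 1`). -/
def Bprod (d : ℕ) (W : ℕ → Matrix (Fin d) (Fin d) ℝ) (p : ℕ) :
    Matrix (Fin d) (Fin d) ℝ :=
  ((List.range p).map (fun q => W (p - q))).prod

lemma cancel_mid {d : ℕ} (A B C : Matrix (Fin d) (Fin d) ℝ)
    (h : Aᵀ * A = 1) : B * Aᵀ * (A * C) = B * C := by
  rw [mul_assoc B, ← mul_assoc Aᵀ, h, one_mul]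

lemma aux_A (N d : ℕ) (lam : Fin d → ℝ)
    (Q : ℕ → Matrix (Fin d) (Fin d) ℝ) (hQ : ∀ p, p ≤ N → (Q p)ᵀ * Q p = 1)
    (W : ℕ → Matrix (Fin d) (Fin d) ℝ)
    (hW : ∀ p, 1 ≤ p → p ≤ N → W p = Q p * Matrix.diagonal lam * (Q (p - 1))ᵀ) :
    ∀ k, k ≤ N →
      ((List.range k).map (fun q => W (N - q))).prod
        = Q N * (Matrix.diagonal lam) ^ k * (Q (N - k))ᵀ := by
  intro k
  induction k with
  | zero =>
    intro _
    simp [mul_eq_one_comm.mp (hQ N le_rfl)]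
  | succ k ih =>
    intro hk
    have hk' : k ≤ N := Nat.le_of_succ_le hk
    rw [List.range_succ, List.map_append, List.prod_append, ih hk']
    have h1 : 1 ≤ N - k := by omega
    have hWk := hW (N - k) h1 (Nat.sub_le _ _)
    have hsub : N - k - 1 = N - (k + 1) := by omega
    simp only [List.map_cons, List.map_nil, List.prod_cons, List.prod_nil, mul_one]
    rw [hWk, hsub, pow_succ, mul_assoc (Q (N - k)) _ _,
      cancel_mid _ _ _ (hQ (N - k) (Nat.sub_le _ _))]
    simp [mul_assoc]

lemma aux_B (N d : ℕ) (lam : Fin d → ℝ)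
    (Q : ℕ → Matrix (Fin d) (Fin d) ℝ) (hQ : ∀ p, p ≤ N → (Q p)ᵀ * Q p = 1)
    (W : ℕ → Matrix (Fin d) (Fin d) ℝ)
    (hW : ∀ p, 1 ≤ p → p ≤ N → W p = Q p * Matrix.diagonal lam * (Q (p - 1))ᵀ) :
    ∀ p, p ≤ N →
      Bprod d W p = Q p * (Matrix.diagonal lam) ^ p * (Q 0)ᵀ := by
  intro p
  induction p with
  | zero =>
    intro _
    simp [Bprod, mul_eq_one_comm.mp (hQ 0 (Nat.zero_le _))]
  | succ p ih =>
    intro hp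
    have hp' : p ≤ N := Nat.le_of_succ_le hp
    have hstep : Bprod d W (p + 1) = W (p + 1) * Bprod d W p := by
      unfold Bprod
      rw [List.range_succ_eq_map, List.map_cons, List.prod_cons, List.map_map]
      simp [Function.comp_def, Nat.succ_sub_succ]
    rw [hstep, ih hp', hW (p + 1) (Nat.le_add_left 1 p) hp]
    simp only [Nat.add_sub_cancel]
    rw [pow_succ', ← mul_assoc, cancel_mid _ _ _ (hQ p hp')]
    simp [mul_assoc]

/-- On the balanced manifold, with `W_p = Q_p Λ Q_{p-1}ᵀ`, the partial products satisfy
`A_{p+1} A_{p+1}ᵀ = (XXᵀ)^{(N-p)/N} = Q_N Λ^{2(N-p)} Q_Nᵀ` and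
`B_{p-1}ᵀ B_{p-1} = (XᵀX)^{(p-1)/N} = Q_0 Λ^{2(p-1)} Q_0ᵀ` (fractional powers of
`XXᵀ = Q_N Λ^{2N} Q_Nᵀ` and `XᵀX = Q_0 Λ^{2N} Q_0ᵀ` being defined spectrally). -/
theorem partial_products_balanced (N d : ℕ) (hN : 1 ≤ N)
    (lam : Fin d → ℝ) (hlam : ∀ i, 0 < lam i)
    (Q : ℕ → Matrix (Fin d) (Fin d) ℝ) (hQ : ∀ p, p ≤ N → (Q p)ᵀ * Q p = 1)
    (W : ℕ → Matrix (Fin d) (Fin d) ℝ)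
    (hW : ∀ p, 1 ≤ p → p ≤ N → W p = Q p * Matrix.diagonal lam * (Q (p - 1))ᵀ) :
    ∀ p, 1 ≤ p → p ≤ N →
      Aprod d W N p * (Aprod d W N p)ᵀ =
        Q N * (Matrix.diagonal lam) ^ (2 * (N - p)) * (Q N)ᵀ ∧
      (Bprod d W (p - 1))ᵀ * Bprod d W (p - 1) =
        Q 0 * (Matrix.diagonal lam) ^ (2 * (p - 1)) * (Q 0)ᵀ := by
  intro p hp1 hpN
  have hdiagT : ∀ k : ℕ, ((Matrix.diagonal lam) ^ k)ᵀ = (Matrix.diagonal lam) ^ k := by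
    intro k
    rw [Matrix.transpose_pow, Matrix.diagonal_transpose]
  constructor
  · have hA : Aprod d W N p = Q N * (Matrix.diagonal lam) ^ (N - p) * (Q p)ᵀ := by
      have h := aux_A N d lam Q hQ W hW (N - p) (Nat.sub_le _ _)
      have hsub : N - (N - p) = p := by omega
      rw [Aprod, h, hsub]
    rw [hA, Matrix.transpose_mul, Matrix.transpose_mul, Matrix.transpose_transpose,
      hdiagT, cancel_mid _ _ _ (hQ p hpN), two_mul, pow_add]
    simp [mul_assoc]
  · have hB := aux_B N d lam Q hQ W hW (p - 1) (by omega)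
    rw [hB, Matrix.transpose_mul, Matrix.transpose_mul, Matrix.transpose_transpose,
      hdiagT]
    rw [← mul_assoc (Q 0), mul_assoc (Q (p - 1)),
      cancel_mid _ _ _ (hQ (p - 1) (by omega)), two_mul, pow_add]
    simp [mul_assoc]
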